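/- For every m ≥ 0 and n ≥ 1, the identity h_m(1+x₁,…,1+xₙ) = Σ_{k=0}^m binomial(m+n−1, m−k) · h_k(x₁,…,xₙ) holds in the polynomial ring F[x₁,…,xₙ]. -/

import Mathlib

open Finset

/-- Hockey stick: `∑_{j ≤ s} C(t+j, j) = C(t+1+s, s)`. -/
lemma hockey (t s : ℕ) : ∑ j ∈ range (s+1), (t+j).choose j = (t+1+s).choose s := by
  have h := Nat.sum_Icc_choose (t+s) t
  rw [← Finset.Ico_add_one_right_eq_Icc, Finset.sum_Ico_eq_sum_range,
    show t + s + 1 - t = s + 1 by omega] at h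
  calc ∑ j ∈ range (s+1), (t+j).choose j
      = ∑ j ∈ range (s+1), (t+j).choose t := by
        refine Finset.sum_congr rfl fun j _ => ?_
        exact Nat.choose_symm_add.symm
    _ = (t+s+1).choose (t+1) := h
    _ = (t+1+s).choose s := by
        rw [show t+s+1 = (t+1)+s by omega, Nat.choose_symm_add]

lemma vand (a : ℕ) : ∀ t r : ℕ,
    ∑ i ∈ range (r+1), (a+i).choose i * (t+(r-i)).choose (r-i) = (a+t+1+r).choose r := by
  induction a with
  | zero =>
    intro t r
    have : ∑ i ∈ range (r+1), (0+i).choose i * (t+(r-i)).choose (r-i)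
        = ∑ i ∈ range (r+1), (t+(r-i)).choose (r-i) := by
      refine Finset.sum_congr rfl fun i _ => ?_
      simp [Nat.zero_add, Nat.choose_self]
    rw [this]
    have hrefl := Finset.sum_range_reflect (fun j => (t+j).choose j) (r+1)
    simp only [Nat.add_sub_cancel] at hrefl
    calc ∑ i ∈ range (r+1), (t+(r-i)).choose (r-i)
        = ∑ j ∈ range (r+1), (t+j).choose j := hrefl
      _ = (t+1+r).choose r := hockey t r
      _ = (0+t+1+r).choose r := by rw [Nat.zero_add]
  | succ a ih =>
    intro t r
    have expand : ∀ i, (a+1+i).choose i = ∑ i' ∈ range (i+1), (a+i').choose i' :=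
      fun i => (hockey a i).symm
    calc ∑ i ∈ range (r+1), (a+1+i).choose i * (t+(r-i)).choose (r-i)
        = ∑ i ∈ range (r+1), ∑ i' ∈ range (i+1),
            (a+i').choose i' * (t+(r-i)).choose (r-i) := by
          refine Finset.sum_congr rfl fun i _ => ?_
          rw [expand i, Finset.sum_mul]
      _ = ∑ i ∈ Ico 0 (r+1), ∑ i' ∈ Ico 0 (i+1),
            (a+i').choose i' * (t+(r-i)).choose (r-i) := by
          simp only [← Nat.Ico_zero_eq_range]
      _ = ∑ i' ∈ Ico 0 (r+1), ∑ i ∈ Ico i' (r+1),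
            (a+i').choose i' * (t+(r-i)).choose (r-i) := by
          rw [Finset.sum_Ico_Ico_comm 0 (r+1)
            (fun i' i => (a+i').choose i' * (t+(r-i)).choose (r-i))]
      _ = ∑ i' ∈ range (r+1), (a+i').choose i' * ((t+1)+(r-i')).choose (r-i') := by
          rw [← Finset.range_eq_Ico]
          refine Finset.sum_congr rfl fun i' hi' => ?_
          rw [Finset.mem_range] at hi'
          rw [← Finset.mul_sum]
          congr 1
          rw [Finset.sum_Ico_eq_sum_range]
          have hrefl := Finset.sum_range_reflect (fun j => (t+j).choose j) (r-i'+1)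
          simp only [Nat.add_sub_cancel] at hrefl
          calc ∑ i ∈ range (r+1-i'), (t+(r-(i'+i))).choose (r-(i'+i))
              = ∑ i ∈ range (r-i'+1), (t+((r-i')-i)).choose ((r-i')-i) := by
                refine Finset.sum_congr (by congr 1; omega) fun i hi => ?_
                congr 1 <;> omega
            _ = ∑ j ∈ range (r-i'+1), (t+j).choose j := hrefl
            _ = (t+1+(r-i')).choose (r-i') := hockey t (r-i')
      _ = (a+(t+1)+1+r).choose r := ih (t+1) r
      _ = (a+1+t+1+r).choose r := by congr 1; omega

lemma vand' (a X r : ℕ) :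
    ∑ p ∈ Finset.HasAntidiagonal.antidiagonal r, (a+p.1).choose p.1 * (X + p.2 - 1).choose p.2
      = (a + X + r).choose r := by
  rw [Finset.Nat.sum_antidiagonal_eq_sum_range_succ_mk]
  cases X with
  | zero =>
    rw [Finset.sum_eq_single_of_mem r (Finset.self_mem_range_succ r)]
    · simp
    · intro i hi hne
      rw [Finset.mem_range] at hi
      have : 0 + (r - i) - 1 < r - i := by omega
      rw [Nat.choose_eq_zero_of_lt this, Nat.mul_zero]
  | succ Y =>
    have : ∀ i ∈ range (r+1), (a+i).choose i * (Y+1+(r-i)-1).choose (r-i)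
        = (a+i).choose i * (Y+(r-i)).choose (r-i) := by
      intro i _
      congr 2
      omega
    rw [Finset.sum_congr rfl this, vand a Y r]
    rfl

lemma sumB {ι : Type*} [DecidableEq ι] (s : Finset ι) (a : ι → ℕ) :
    ∀ r : ℕ, ∑ b ∈ s.piAntidiag r, ∏ j ∈ s, (a j + b j).choose (b j)
      = ((∑ j ∈ s, a j) + s.card + r - 1).choose r := by
  induction s using Finset.cons_induction with
  | empty =>
    intro r
    rcases Nat.eq_zero_or_pos r with rfl | hr
    · simp
    · rw [Finset.piAntidiag_empty_of_ne_zero hr.ne']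
      simp [Nat.choose_eq_zero_of_lt (by omega : r - 1 < r)]
  | cons i s hi ih =>
    intro r
    rw [Finset.piAntidiag_cons hi, Finset.sum_disjiUnion]
    have key : ∀ p ∈ Finset.HasAntidiagonal.antidiagonal r,
        (∑ b ∈ (s.piAntidiag p.2).map
            (addRightEmbedding fun t => if t = i then p.1 else 0),
          ∏ j ∈ Finset.cons i s hi, (a j + b j).choose (b j))
        = (a i + p.1).choose p.1 *
            ((∑ j ∈ s, a j) + s.card + p.2 - 1).choose p.2 := by
      intro p _
      rw [Finset.sum_map]
      have : ∀ b ∈ s.piAntidiag p.2,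
          (∏ j ∈ Finset.cons i s hi,
            (a j + (addRightEmbedding fun t => if t = i then p.1 else 0) b j).choose
              ((addRightEmbedding fun t => if t = i then p.1 else 0) b j))
          = (a i + p.1).choose p.1 * ∏ j ∈ s, (a j + b j).choose (b j) := by
        intro b hb
        rw [Finset.mem_piAntidiag] at hb
        have hbi : b i = 0 := by
          by_contra h
          exact hi (hb.2 i h)
        rw [Finset.prod_cons]
        simp only [addRightEmbedding_apply, Pi.add_apply]
        congr 1
        · simp [hbi]
        · refine Finset.prod_congr rfl fun j hj => ?_
          have : j ≠ i := fun h => hi (h ▸ hj)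
          simp [this]
      rw [Finset.sum_congr rfl this, ← Finset.mul_sum, ih p.2]
    rw [Finset.sum_congr rfl key]
    have := vand' (a i) ((∑ j ∈ s, a j) + s.card) r
    rw [this]
    rw [Finset.sum_cons, Finset.card_cons]
    congr 1
    omega

/-- Complete homogeneous polynomial of degree `m` in variables `x j`, `j : ι`. -/
noncomputable def homog {ι : Type*} [Fintype ι] [DecidableEq ι] {R : Type*} [CommSemiring R]
    (m : ℕ) (x : ι → R) : R :=
  ∑ k ∈ Finset.univ.piAntidiag m, ∏ j, x j ^ k j

theorem stmt_5 (F : Type*) [Field F] [CharZero F] (n : ℕ) (hn : 1 ≤ n) (m : ℕ) :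
    homog m (fun j : Fin n => 1 + (MvPolynomial.X j : MvPolynomial (Fin n) F))
      = ∑ k ∈ Finset.range (m + 1),
          ((m + n - 1).choose (m - k) : MvPolynomial (Fin n) F)
            * homog k (fun j : Fin n => MvPolynomial.X j) := by
  classical
  have hpow : ∀ (j : Fin n) (c : ℕ),
      (1 + (MvPolynomial.X j : MvPolynomial (Fin n) F)) ^ c
        = ∑ i ∈ range (c+1),
            (MvPolynomial.X j : MvPolynomial (Fin n) F) ^ i
              * ((c.choose i : ℕ) : MvPolynomial (Fin n) F) := by
    intro j c
    rw [add_comm, add_pow]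
    simp
  have memA : ∀ (r : ℕ) (f : Fin n → ℕ),
      f ∈ (univ : Finset (Fin n)).piAntidiag r ↔ ∑ j, f j = r := by
    intro r f
    simp [Finset.mem_piAntidiag]
  have memP : ∀ (k f : Fin n → ℕ),
      f ∈ Fintype.piFinset (fun j => range (k j + 1)) ↔ ∀ j, f j ≤ k j := by
    intro k f
    simp [Nat.lt_succ_iff]
  calc homog m (fun j : Fin n => 1 + (MvPolynomial.X j : MvPolynomial (Fin n) F))
      = ∑ k ∈ (univ : Finset (Fin n)).piAntidiag m,
          ∏ j, (1 + (MvPolynomial.X j : MvPolynomial (Fin n) F)) ^ k j := rfl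
    _ = ∑ p ∈ ((univ : Finset (Fin n)).piAntidiag m).sigma
            (fun k => Fintype.piFinset fun j => range (k j + 1)),
          ((∏ j, (p.1 j).choose (p.2 j) : ℕ) : MvPolynomial (Fin n) F)
            * ∏ j, (MvPolynomial.X j : MvPolynomial (Fin n) F) ^ p.2 j := by
        rw [Finset.sum_sigma]
        refine Finset.sum_congr rfl fun k _ => ?_
        calc ∏ j, (1 + (MvPolynomial.X j : MvPolynomial (Fin n) F)) ^ k j
            = ∏ j, ∑ i ∈ range (k j + 1),
                (MvPolynomial.X j : MvPolynomial (Fin n) F) ^ i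
                  * (((k j).choose i : ℕ) : MvPolynomial (Fin n) F) :=
              Finset.prod_congr rfl fun j _ => hpow j (k j)
          _ = ∑ a ∈ Fintype.piFinset (fun j => range (k j + 1)),
                ∏ j, (MvPolynomial.X j : MvPolynomial (Fin n) F) ^ a j
                  * (((k j).choose (a j) : ℕ) : MvPolynomial (Fin n) F) :=
              Finset.prod_univ_sum _ _
          _ = ∑ a ∈ Fintype.piFinset (fun j => range (k j + 1)),
                ((∏ j, (k j).choose (a j) : ℕ) : MvPolynomial (Fin n) F)
                  * ∏ j, (MvPolynomial.X j : MvPolynomial (Fin n) F) ^ a j := by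
              refine Finset.sum_congr rfl fun a _ => ?_
              rw [Finset.prod_mul_distrib, Nat.cast_prod, mul_comm]
    _ = ∑ q ∈ ((range (m+1)).sigma fun s => (univ : Finset (Fin n)).piAntidiag s).sigma
            (fun q => (univ : Finset (Fin n)).piAntidiag (m - q.1)),
          ((∏ j, (q.1.2 j + q.2 j).choose (q.1.2 j) : ℕ) : MvPolynomial (Fin n) F)
            * ∏ j, (MvPolynomial.X j : MvPolynomial (Fin n) F) ^ q.1.2 j := by
        refine Finset.sum_nbij' (fun p => ⟨⟨∑ j, p.2 j, p.2⟩, fun j => p.1 j - p.2 j⟩)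
          (fun q => ⟨fun j => q.1.2 j + q.2 j, q.1.2⟩) ?_ ?_ ?_ ?_ ?_
        · rintro ⟨k, a⟩ hp
          simp only [Finset.mem_sigma, memA, memP] at hp
          obtain ⟨hk, ha⟩ := hp
          simp only [Finset.mem_sigma, Finset.mem_range, memA]
          have hsub : (∑ j, (k j - a j)) + ∑ j, a j = m := by
            rw [← Finset.sum_add_distrib, ← hk]
            exact Finset.sum_congr rfl fun j _ => by have := ha j; omega
          have hab : ∑ j, a j ≤ ∑ j, k j := Finset.sum_le_sum fun j _ => ha j
          exact ⟨⟨by omega, trivial⟩, by omega⟩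
        · rintro ⟨⟨s, a⟩, b⟩ hq
          simp only [Finset.mem_sigma, Finset.mem_range, memA] at hq
          obtain ⟨⟨hs, ha⟩, hb⟩ := hq
          simp only [Finset.mem_sigma, memA, memP]
          constructor
          · rw [Finset.sum_add_distrib, ha, hb]
            omega
          · intro j
            omega
        · rintro ⟨k, a⟩ hp
          simp only [Finset.mem_sigma, memA, memP] at hp
          obtain ⟨hk, ha⟩ := hp
          have h1 : (fun j => a j + (k j - a j)) = k :=
            funext fun j => by have := ha j; omega
          show (⟨fun j => a j + (k j - a j), a⟩ : Σ _ : Fin n → ℕ, Fin n → ℕ) = ⟨k, a⟩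
          rw [h1]
        · rintro ⟨⟨s, a⟩, b⟩ hq
          simp only [Finset.mem_sigma, Finset.mem_range, memA] at hq
          obtain ⟨⟨hs, ha⟩, hb⟩ := hq
          have h2 : (fun j => a j + b j - a j) = b := funext fun j => by omega
          show (⟨⟨∑ j, a j, a⟩, fun j => a j + b j - a j⟩ :
            Σ _ : Σ _ : ℕ, Fin n → ℕ, Fin n → ℕ) = ⟨⟨s, a⟩, b⟩
          rw [h2, ha]
        · rintro ⟨k, a⟩ hp
          simp only [Finset.mem_sigma, memA, memP] at hp
          obtain ⟨hk, ha⟩ := hp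
          have hfix : ∏ j, (a j + (k j - a j)).choose (a j) = ∏ j, (k j).choose (a j) :=
            Finset.prod_congr rfl fun j _ => by have := ha j; congr 1; omega
          rw [hfix]
    _ = ∑ q ∈ (range (m+1)).sigma (fun s => (univ : Finset (Fin n)).piAntidiag s),
          (((m + n - 1).choose (m - q.1) : ℕ) : MvPolynomial (Fin n) F)
            * ∏ j, (MvPolynomial.X j : MvPolynomial (Fin n) F) ^ q.2 j := by
        rw [Finset.sum_sigma, Finset.sum_sigma]
        conv_rhs => rw [Finset.sum_sigma]
        refine Finset.sum_congr rfl fun s hs => ?_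
        refine Finset.sum_congr rfl fun a ha => ?_
        rw [Finset.mem_range] at hs
        rw [memA] at ha
        dsimp only
        have hchsym : ∀ b ∈ (univ : Finset (Fin n)).piAntidiag (m - s),
            (∏ j, (a j + b j).choose (a j)) = ∏ j, (a j + b j).choose (b j) :=
          fun b _ => Finset.prod_congr rfl fun j _ => Nat.choose_symm_add
        have key : (∑ b ∈ (univ : Finset (Fin n)).piAntidiag (m - s),
              ∏ j, (a j + b j).choose (a j)) = (m + n - 1).choose (m - s) := by
          rw [Finset.sum_congr rfl hchsym, sumB]
          rw [show (univ : Finset (Fin n)).card = n by simp, ha]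
          congr 1
          omega
        rw [← Finset.sum_mul, ← Nat.cast_sum, key]
    _ = ∑ k ∈ Finset.range (m + 1),
          ((m + n - 1).choose (m - k) : MvPolynomial (Fin n) F)
            * homog k (fun j : Fin n => MvPolynomial.X j) := by
        rw [Finset.sum_sigma]
        refine Finset.sum_congr rfl fun s _ => ?_
        rw [show homog s (fun j : Fin n => (MvPolynomial.X j : MvPolynomial (Fin n) F))
          = ∑ a ∈ (univ : Finset (Fin n)).piAntidiag s,
              ∏ j, (MvPolynomial.X j : MvPolynomial (Fin n) F) ^ a j from rfl,
          Finset.mul_sum]
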